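/- Let M be an inverse monoid whose idempotents form a Boolean algebra with top element 1 and bottom element 0. Equip M with the compact-open topology generated by the sets V_{e,f} = {m : e ≤ m*m and mem* ≤ f}, their *-duals, and the sets V_{e,#} = {m : e·m*m = 0} and their *-duals, for idempotents e, f. Then: (i) M is a zero-dimensional topological inverse monoid; (ii) the idempotents form a discrete subspace; (iii) {0} is open and the group of units of M is clopen. -/

import Mathlib

/-- An inverse monoid: a monoid in which every element `x` has a unique (semigroup) inverse,
denoted `star x`. -/
class InverseMonoid (M : Type*) extends Monoid M, Star M where
  mul_star_mul_self : ∀ x : M, x * star x * x = x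
  star_mul_self_star : ∀ x : M, star x * x * star x = star x
  star_unique : ∀ x y : M, x * y * x = x → y * x * y = y → y = star x

/-- The idempotents of an inverse monoid. -/
abbrev Idem (M : Type*) [InverseMonoid M] : Type _ := {e : M // IsIdempotentElem e}

section SubBasic
variable {M : Type*} [InverseMonoid M]

/-- `V_{e,f} = {m | e ≤ m*m, mem* ≤ f}`, the order on idempotents being `e ≤ s ↔ e * s = e`. -/
def Vef (e f : M) : Set M :=
  {m | e * (star m * m) = e ∧ (m * e * star m) * f = m * e * star m}

/-- The `*`-dual `V*_{e,f} = {m | e ≤ mm*, m*em ≤ f}`. -/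
def VefStar (e f : M) : Set M :=
  {m | e * (m * star m) = e ∧ (star m * e * m) * f = star m * e * m}

/-- `V_{e,#} = {m | e · m*m = 0}` (`z` plays the role of the zero). -/
def Vsharp (z e : M) : Set M := {m | e * (star m * m) = z}

/-- `V_{#,e} = {m | e · mm* = 0}` (`z` plays the role of the zero). -/
def sharpV (z e : M) : Set M := {m | e * (m * star m) = z}

/-- The compact-open topology on an inverse monoid, generated by the sets `V_{e,f}`, their
`*`-duals, and the sets `V_{e,#}`, `V_{#,e}`, over idempotents `e, f`. -/
def compactOpenTopology (z : M) : TopologicalSpace M :=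
  TopologicalSpace.generateFrom
    {s | ∃ e f : M, IsIdempotentElem e ∧ IsIdempotentElem f ∧
      (s = Vef e f ∨ s = VefStar e f ∨ s = Vsharp z e ∨ s = sharpV z e)}

end SubBasic

namespace IMAux
variable {M : Type*} [InverseMonoid M]

open InverseMonoid

lemma mss (x : M) : x * star x * x = x := mul_star_mul_self x
lemma sms (x : M) : star x * x * star x = star x := star_mul_self_star x

/-- reassociation helpers -/
lemma ra2 {a b c : M} (h : a * b = c) (y : M) : a * (b * y) = c * y := by
  rw [← mul_assoc, h]
lemma ra3 {a b c d : M} (h : a * b * c = d) (y : M) : a * (b * (c * y)) = d * y := by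
  simp only [← mul_assoc]; rw [h]
lemma ra4 {a b c d e : M} (h : a * b * c * d = e) (y : M) :
    a * (b * (c * (d * y))) = e * y := by simp only [← mul_assoc]; rw [h]
lemma rt3 {a b c d : M} (h : a * b * c = d) : a * (b * c) = d := by
  rw [← mul_assoc, h]
lemma rt4 {a b c d e : M} (h : a * b * c * d = e) : a * (b * (c * d)) = e := by
  simp only [← mul_assoc]; rw [h]
lemma ra5 {a b c d e g : M} (h : a * b * c * d * e = g) (y : M) :
    a * (b * (c * (d * (e * y)))) = g * y := by simp only [← mul_assoc]; rw [h]
lemma ra4' {a b c d g : M} (h : a * b * (c * d) = g) (y : M) :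
    a * (b * (c * (d * y))) = g * y := by
  rw [← mul_assoc] at h; exact ra4 h y
lemma rt4' {a b c d g : M} (h : a * b * (c * d) = g) : a * (b * (c * d)) = g := by
  rw [← mul_assoc] at h; exact rt4 h

lemma star_star (x : M) : star (star x) = x :=
  (star_unique (star x) x (sms x) (mss x)).symm

lemma star_of_idem {e : M} (he : IsIdempotentElem e) : star e = e :=
  (star_unique e e (by rw [he.eq, he.eq]) (by rw [he.eq, he.eq])).symm

lemma isIdem_sm (m : M) : IsIdempotentElem (star m * m) := by
  show star m * m * (star m * m) = _
  rw [mul_assoc, ra3 (sms m)]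

lemma isIdem_ms (m : M) : IsIdempotentElem (m * star m) := by
  show m * star m * (m * star m) = _
  rw [mul_assoc, ra3 (mss m)]

lemma idem_mul_idem {e f : M} (he : IsIdempotentElem e) (hf : IsIdempotentElem f) :
    IsIdempotentElem (e * f) := by
  set x := star (e * f) with hx
  have A : e * (f * (x * (e * f))) = e * f := by
    simpa only [mul_assoc] using mss (e * f)
  have B : x * e * f * x = x := by
    simpa only [mul_assoc] using sms (e * f)
  have h1 : (e * f) * (f * x * e) * (e * f) = e * f := by
    simp only [mul_assoc]
    rw [ra2 hf.eq, ra2 he.eq]; exact A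
  have h2 : (f * x * e) * (e * f) * (f * x * e) = f * x * e := by
    simp only [mul_assoc]
    rw [ra2 he.eq, ra2 hf.eq, ra4 B]
  have hxval : f * x * e = x := star_unique (e * f) (f * x * e) h1 h2
  have hxidem : IsIdempotentElem x := by
    have : f * x * e * (f * x * e) = f * x * e := by
      simp only [mul_assoc]
      rw [ra4 B]
    show x * x = x
    rw [← hxval]; exact this
  have hef : e * f = x := by
    have h := star_of_idem hxidem
    rw [hx, star_star] at h; rw [hx]; exact h
  rw [hef]; exact hxidem

lemma idem_comm {e f : M} (he : IsIdempotentElem e) (hf : IsIdempotentElem f) :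
    e * f = f * e := by
  have hef := idem_mul_idem he hf
  have hfe := idem_mul_idem hf he
  have h3 : (e * f) * (f * e) * (e * f) = e * f := by
    simp only [mul_assoc]
    rw [ra2 hf.eq, ra2 he.eq]
    exact rt4' hef.eq
  have h4 : (f * e) * (e * f) * (f * e) = f * e := by
    simp only [mul_assoc]
    rw [ra2 he.eq, ra2 hf.eq]
    exact rt4' hfe.eq
  have := star_unique (e * f) (f * e) h3 h4
  rw [star_of_idem hef] at this
  exact this.symm

lemma star_mul (x y : M) : star (x * y) = star y * star x := by
  refine (star_unique (x * y) (star y * star x) ?_ ?_).symm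
  · simp only [mul_assoc]
    rw [ra4' (idem_comm (isIdem_ms y) (isIdem_sm x))]
    simp only [mul_assoc]
    rw [ra3 (mss x), rt3 (mss y)]
  · simp only [mul_assoc]
    rw [ra4' (idem_comm (isIdem_sm x) (isIdem_ms y))]
    simp only [mul_assoc]
    rw [ra3 (sms y), rt3 (sms x)]

/-- transitivity of the product order, no idempotence needed. -/
lemma le_trans' {x y f : M} (h1 : x * y = x) (h2 : y * f = y) : x * f = x := by
  rw [← h1, mul_assoc, h2]

/-- conjugate of an idempotent below `star m * m` is idempotent -/
lemma conj_idem {e : M} (m : M) (he : IsIdempotentElem e) (h : e * (star m * m) = e) :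
    IsIdempotentElem (m * e * star m) := by
  have h' : e * star m * m = e := by rw [mul_assoc]; exact h
  have hc : star m * m * e = e * (star m * m) := idem_comm (isIdem_sm m) he
  show m * e * star m * (m * e * star m) = _
  simp only [mul_assoc]
  rw [ra3 hc]
  simp only [mul_assoc]
  rw [ra2 he.eq, rt3 (sms m)]

/-- pulling back the conjugate -/
lemma conj_back {e : M} (m : M) (he : IsIdempotentElem e) (h : e * (star m * m) = e) :
    star m * (m * e * star m) * m = e := by
  have h' : e * star m * m = e := by rw [mul_assoc]; exact h
  have hc : star m * m * e = e * (star m * m) := idem_comm (isIdem_sm m) he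
  simp only [mul_assoc]
  rw [h, ← mul_assoc, hc, h]

/-- `m e m* ≤ m m*` -/
lemma conj_le (e m : M) : (m * e * star m) * (m * star m) = m * e * star m := by
  simp only [mul_assoc]
  rw [rt3 (sms m)]

section BA
variable [BooleanAlgebra (Idem M)]

lemma coe_inf (horder : ∀ e f : Idem M, e ≤ f ↔ (e : M) * f = e) (u v : Idem M) :
    ((u ⊓ v : Idem M) : M) = (u : M) * v := by
  have hw : IsIdempotentElem ((u : M) * v) := idem_mul_idem u.2 v.2
  have h1 : (⟨(u:M) * v, hw⟩ : Idem M) ≤ u := by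
    rw [horder]
    show (u:M) * v * u = (u:M) * v
    rw [mul_assoc, idem_comm v.2 u.2, ← mul_assoc, u.2.eq]
  have h2 : (⟨(u:M) * v, hw⟩ : Idem M) ≤ v := by
    rw [horder]
    show (u:M) * v * v = (u:M) * v
    rw [mul_assoc, v.2.eq]
  have h3 : u ⊓ v ≤ ⟨(u:M) * v, hw⟩ := by
    rw [horder]
    show ((u ⊓ v : Idem M) : M) * ((u:M) * v) = ((u ⊓ v : Idem M) : M)
    have l1 : ((u ⊓ v : Idem M) : M) * u = ((u ⊓ v : Idem M) : M) :=
      (horder _ _).mp inf_le_left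
    have l2 : ((u ⊓ v : Idem M) : M) * v = ((u ⊓ v : Idem M) : M) :=
      (horder _ _).mp inf_le_right
    rw [← mul_assoc, l1, l2]
  have : u ⊓ v = ⟨(u:M) * v, hw⟩ := le_antisymm h3 (le_inf h1 h2)
  rw [this]

lemma mul_coe_bot_iff (horder : ∀ e f : Idem M, e ≤ f ↔ (e : M) * f = e) (u v : Idem M) :
    (u : M) * v = ((⊥ : Idem M) : M) ↔ u ⊓ v = ⊥ := by
  rw [← coe_inf horder]
  exact ⟨fun h => Subtype.ext h, fun h => by rw [h]⟩

lemma inf_compl_bot_iff (u v : Idem M) : u ⊓ vᶜ = ⊥ ↔ u ≤ v := by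
  rw [← disjoint_iff]
  exact disjoint_compl_right_iff

/-- the subbasis -/
def SB (z : M) : Set (Set M) :=
  {s | ∃ e f : M, IsIdempotentElem e ∧ IsIdempotentElem f ∧
    (s = Vef e f ∨ s = VefStar e f ∨ s = Vsharp z e ∨ s = sharpV z e)}

lemma dz (horder : ∀ e f : Idem M, e ≤ f ↔ (e : M) * f = e)
    {d u : Idem M} {n : M} (hdu : d ≤ u)
    (h1 : (d : M) * (star n * n) = ((⊥ : Idem M) : M))
    (h2 : (u : M) * (star n * n) = u) : d = ⊥ := by
  have hd : (d : M) * u = d := (horder _ _).mp hdu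
  have key : (d : M) * (star n * n) = (d : M) := by
    calc (d:M) * (star n * n) = (d:M) * u * (star n * n) := by rw [hd]
      _ = (d:M) * ((u:M) * (star n * n)) := by rw [mul_assoc]
      _ = (d:M) * u := by rw [h2]
      _ = d := hd
  exact Subtype.ext (by rw [← key]; exact h1)

lemma vef_disj
    (hbot : ∀ m : M, ((⊥ : Idem M) : M) * m = ((⊥ : Idem M) : M) ∧
      m * ((⊥ : Idem M) : M) = ((⊥ : Idem M) : M))
    {u v : Idem M} {D n : M} (hD : IsIdempotentElem D)
    (hDu : D * (u : M) = D)
    (hvvc : (v : M) * ((vᶜ : Idem M) : M) = ((⊥ : Idem M) : M))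
    (p1 : D * (star n * n) = D)
    (p2 : (n * D * star n) * ((vᶜ : Idem M) : M) = n * D * star n)
    (q2 : (n * (u:M) * star n) * (v:M) = n * (u:M) * star n) :
    D = ((⊥ : Idem M) : M) := by
  have p1' : D * star n * n = D := by rw [mul_assoc]; exact p1
  have r1 : (n * D * star n) * (n * (u:M) * star n) = n * D * star n := by
    simp only [mul_assoc]
    rw [ra3 p1', ra2 hDu]
  have r2 : (n * D * star n) * (v:M) = n * D * star n := le_trans' r1 q2
  have r3 : n * D * star n = ((⊥ : Idem M) : M) := by
    have h5 : n * D * star n = n * D * star n * ((v:M) * ((vᶜ : Idem M):M)) := by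
      rw [← mul_assoc (n * D * star n) (v:M), r2, p2]
    rw [hvvc, (hbot _).2] at h5
    exact h5
  have h6 := conj_back n hD p1
  rw [r3, (hbot _).2, (hbot _).1] at h6
  exact h6.symm

lemma vef_compl (horder : ∀ e f : Idem M, e ≤ f ↔ (e : M) * f = e)
    (hbot : ∀ m : M, ((⊥ : Idem M) : M) * m = ((⊥ : Idem M) : M) ∧
      m * ((⊥ : Idem M) : M) = ((⊥ : Idem M) : M))
    (u v : Idem M) {m : M} (hm : m ∉ Vef (u : M) (v : M)) :
    ∃ W ∈ SB ((⊥ : Idem M) : M), m ∈ W ∧ W ∩ Vef (u : M) (v : M) = ∅ := by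
  by_cases h1 : (u : M) * (star m * m) = u
  · -- second condition fails
    have h2 : ¬ ((m * u * star m) * v = m * u * star m) := by
      intro h; exact hm ⟨h1, h⟩
    set c : Idem M := ⟨m * (u:M) * star m, conj_idem m u.2 h1⟩ with hc
    set g : Idem M := c ⊓ vᶜ with hgdef
    have hg : g ≠ ⊥ := by
      intro h
      exact h2 ((horder c v).mp ((inf_compl_bot_iff c v).mp h))
    have hgc : (g : M) * ((m : M) * u * star m) = g := (horder g c).mp inf_le_left
    have hgv : (g : M) * ((vᶜ : Idem M) : M) = g := (horder g vᶜ).mp inf_le_right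
    have hgmm : (g : M) * (m * star m) = g := le_trans' hgc (conj_le (u:M) m)
    have hmmg : (m * star m) * (g : M) = g := by
      rw [idem_comm (isIdem_ms m) g.2]; exact hgmm
    have hd0 : IsIdempotentElem (star m * (g:M) * m) := by
      show star m * (g : M) * m * (star m * (g : M) * m) = _
      simp only [mul_assoc]
      rw [ra3 hmmg, ra2 g.2.eq]
    have mdm : m * (star m * (g : M) * m) * star m = g := by
      simp only [mul_assoc]
      rw [hgmm, ← mul_assoc, hmmg]
    have hWa : star m * (g:M) * m * (star m * m) = star m * (g:M) * m := by
      simp only [mul_assoc]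
      rw [rt3 (mss m)]
    refine ⟨Vef (star m * (g:M) * m) ((vᶜ : Idem M) : M),
      ⟨_, _, hd0, (vᶜ : Idem M).2, Or.inl rfl⟩, ⟨hWa, ?_⟩, ?_⟩
    · rw [mdm]; exact hgv
    · ext n
      simp only [Set.mem_inter_iff, Set.mem_empty_iff_false, iff_false, not_and]
      rintro ⟨p1, p2⟩ ⟨q1, q2⟩
      have hd0u : (star m * (g:M) * m) * u = star m * (g:M) * m := by
        have e1 : star m * (g:M) * m * u = star m * ((g:M) * ((m * u * star m) * m)) := by
          simp only [mul_assoc]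
          rw [h1]
        rw [e1, ← mul_assoc (g:M), hgc, ← mul_assoc]
      have vvc : (v : M) * ((vᶜ : Idem M) : M) = ((⊥ : Idem M) : M) :=
        (mul_coe_bot_iff horder v vᶜ).mpr inf_compl_eq_bot'
      have r4 := vef_disj hbot hd0 hd0u vvc p1 p2 q2
      apply hg
      apply Subtype.ext
      show (g : M) = _
      rw [← mdm, r4, (hbot m).2, (hbot (star m)).1]
  · -- first condition fails
    set s : Idem M := ⟨star m * m, isIdem_sm m⟩ with hs
    set d : Idem M := u ⊓ sᶜ with hd
    have hdne : d ≠ ⊥ := by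
      intro h
      exact h1 ((horder u s).mp ((inf_compl_bot_iff u s).mp h))
    have hds : d ⊓ s = ⊥ := by
      rw [hd, inf_assoc, inf_comm sᶜ s, inf_compl_eq_bot', inf_bot_eq]
    have hmem : (d : M) * (star m * m) = ((⊥ : Idem M) : M) :=
      (mul_coe_bot_iff horder d s).mpr hds
    refine ⟨Vsharp ((⊥ : Idem M) : M) (d : M),
      ⟨(d:M), 1, d.2, by simp [IsIdempotentElem], Or.inr (Or.inr (Or.inl rfl))⟩, hmem, ?_⟩
    ext n
    simp only [Set.mem_inter_iff, Set.mem_empty_iff_false, iff_false, not_and]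
    intro hn1 hn2
    exact absurd (dz horder inf_le_left hn1 hn2.1) hdne

lemma vsharp_compl (horder : ∀ e f : Idem M, e ≤ f ↔ (e : M) * f = e)
    (hbot : ∀ m : M, ((⊥ : Idem M) : M) * m = ((⊥ : Idem M) : M) ∧
      m * ((⊥ : Idem M) : M) = ((⊥ : Idem M) : M))
    (u : Idem M) {m : M} (hm : m ∉ Vsharp ((⊥ : Idem M) : M) (u : M)) :
    ∃ W ∈ SB ((⊥ : Idem M) : M), m ∈ W ∧ W ∩ Vsharp ((⊥ : Idem M) : M) (u : M) = ∅ := by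
  set s : Idem M := ⟨star m * m, isIdem_sm m⟩ with hs
  set d : Idem M := u ⊓ s with hd
  have hdne : d ≠ ⊥ := by
    intro h
    exact hm ((mul_coe_bot_iff horder u s).mpr (hd ▸ h))
  have hdu : (d : M) * u = d := (horder _ _).mp inf_le_left
  have hdm : (d : M) * (star m * m) = d := (horder d s).mp inf_le_right
  refine ⟨Vef (d : M) 1, ⟨(d:M), 1, d.2, by simp [IsIdempotentElem], Or.inl rfl⟩,
    ⟨hdm, by rw [mul_one]⟩, ?_⟩
  ext n
  simp only [Set.mem_inter_iff, Set.mem_empty_iff_false, iff_false, not_and]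
  rintro ⟨p1, _⟩ q1
  apply hdne
  apply Subtype.ext
  show (d : M) = _
  calc (d:M) = (d:M) * (star n * n) := p1.symm
    _ = (d:M) * (u:M) * (star n * n) := by rw [hdu]
    _ = (d:M) * ((u:M) * (star n * n)) := by rw [mul_assoc]
    _ = (d:M) * ((⊥ : Idem M) : M) := by rw [q1]
    _ = ((⊥ : Idem M) : M) := (hbot _).2

lemma vef_step {u v e' : M} (hu : IsIdempotentElem u) {m n : M}
    (hm : m ∈ Vef e' v) (hn : n ∈ Vef u e') : m * n ∈ Vef u v := by
  obtain ⟨M1, M2⟩ := hm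
  obtain ⟨N1, N2⟩ := hn
  obtain ⟨w, hw⟩ : ∃ w, n * u * star n = w := ⟨_, rfl⟩
  have cb : star n * w * n = u := by rw [← hw]; exact conj_back n hu N1
  have wns : w * (n * star n) = w := by rw [← hw]; exact conj_le u n
  have we' : w * e' = w := by rw [← hw]; exact N2
  have wL : w * (star m * m) = w := le_trans' we' M1
  constructor
  · show u * (star (m * n) * (m * n)) = u
    have key : u * (star (m * n) * (m * n)) = star n * (w * (star m * m)) * n := by
      conv_lhs => rw [← cb]
      have wns' : w * n * star n = w := by rw [mul_assoc]; exact wns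
      simp only [star_mul, mul_assoc]
      rw [ra3 wns']
    rw [key, wL]
    exact cb
  · show ((m * n) * u * star (m * n)) * v = (m * n) * u * star (m * n)
    have r : (m * w * star m) * (m * e' * star m) = m * w * star m := by
      have wL' : w * star m * m = w := by rw [mul_assoc]; exact wL
      simp only [mul_assoc]
      rw [ra3 wL', ra2 we']
    have r2 := le_trans' r M2
    calc ((m*n) * u * star (m*n)) * v = (m * w * star m) * v := by
          rw [← hw]; simp only [star_mul, mul_assoc]
      _ = m * w * star m := r2
      _ = (m*n) * u * star (m*n) := by rw [← hw]; simp only [star_mul, mul_assoc]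

lemma vef_mul_nbhd {u v : M} (hu : IsIdempotentElem u) {a b : M} (hab : a * b ∈ Vef u v) :
    IsIdempotentElem (b * u * star b) ∧ a ∈ Vef (b * u * star b) v ∧
      b ∈ Vef u (b * u * star b) := by
  obtain ⟨h1, h2⟩ := hab
  have hq : u * (star b * (star a * (a * b))) = u := by
    simpa only [star_mul, mul_assoc] using h1
  have hX : (star b * (star a * (a * b))) * (star b * b) = star b * (star a * (a * b)) := by
    simp only [mul_assoc]
    rw [rt3 (mss b)]
  have hub : u * (star b * b) = u := le_trans' hq hX
  have he' : IsIdempotentElem (b * u * star b) := conj_idem b hu hub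
  have k1 : (b * u * star b) * (b * star b) = b * u * star b := conj_le u b
  have k3 : b * u * star b = (b * u * star b) * ((star a * a) * (b * star b)) := by
    conv_lhs => rw [← hq]
    simp only [mul_assoc]
  have k4 : (star a * a) * (b * star b) = (b * star b) * (star a * a) :=
    idem_comm (isIdem_sm a) (isIdem_ms b)
  have k5 : b * u * star b = (b * u * star b) * ((b * star b) * (star a * a)) := by
    rw [← k4]; exact k3
  refine ⟨he', ⟨?_, ?_⟩, hub, he'.eq⟩
  · calc (b * u * star b) * (star a * a)
        = (b * u * star b) * ((b * star b) * (star a * a)) := by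
          conv_lhs => rw [k5]
          simp only [mul_assoc]
          rw [rt4' (isIdem_sm a).eq]
      _ = b * u * star b := k5.symm
  · show (a * (b * u * star b) * star a) * v = a * (b * u * star b) * star a
    have h2' := h2
    simp only [star_mul, mul_assoc] at h2' ⊢
    exact h2'

lemma vsharp_mul_nbhd (horder : ∀ e f : Idem M, e ≤ f ↔ (e : M) * f = e)
    (hbot : ∀ m : M, ((⊥ : Idem M) : M) * m = ((⊥ : Idem M) : M) ∧
      m * ((⊥ : Idem M) : M) = ((⊥ : Idem M) : M))
    (u : Idem M) {a b : M}
    (hab : a * b ∈ Vsharp ((⊥ : Idem M) : M) (u : M)) :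
    ∃ g u₁ u₂ : Idem M,
      a ∈ Vsharp ((⊥ : Idem M) : M) (g : M) ∧
      b ∈ Vef (u₁ : M) (g : M) ∧ b ∈ Vsharp ((⊥ : Idem M) : M) (u₂ : M) ∧
      ∀ m n : M, m ∈ Vsharp ((⊥ : Idem M) : M) (g : M) →
        n ∈ Vef (u₁ : M) (g : M) → n ∈ Vsharp ((⊥ : Idem M) : M) (u₂ : M) →
        m * n ∈ Vsharp ((⊥ : Idem M) : M) (u : M) := by
  set s : Idem M := ⟨star b * b, isIdem_sm b⟩ with hs
  have hu₁s : ((u ⊓ s : Idem M) : M) * (star b * b) = ((u ⊓ s : Idem M) : M) :=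
    (horder _ _).mp inf_le_right
  have hgi : IsIdempotentElem (b * ((u ⊓ s : Idem M) : M) * star b) :=
    conj_idem b (u ⊓ s).2 hu₁s
  refine ⟨⟨b * ((u ⊓ s : Idem M) : M) * star b, hgi⟩, u ⊓ s, u ⊓ sᶜ, ?_, ?_, ?_, ?_⟩
  · -- a ∈ Vsharp z g
    show (b * ((u ⊓ s : Idem M) : M) * star b) * (star a * a) = ((⊥ : Idem M) : M)
    have hXbot : u ⊓ ⟨star (a*b) * (a*b), isIdem_sm (a*b)⟩ = ⊥ :=
      (mul_coe_bot_iff horder u _).mp hab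
    have u₁X : (u ⊓ s) ⊓ (⟨star (a*b) * (a*b), isIdem_sm (a*b)⟩ : Idem M) = ⊥ :=
      eq_bot_iff.mpr ((inf_le_inf_right _ inf_le_left).trans hXbot.le)
    have u₁z : ((u ⊓ s : Idem M) : M) * (star (a*b) * (a*b)) = ((⊥ : Idem M) : M) :=
      (mul_coe_bot_iff horder _ _).mpr u₁X
    have u₁z' : ((u ⊓ s : Idem M) : M) * (star b * (star a * (a * b)))
        = ((⊥ : Idem M) : M) := by
      simpa only [star_mul, mul_assoc] using u₁z
    have hcu : star b * b * ((u ⊓ s : Idem M) : M)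
        = ((u ⊓ s : Idem M) : M) * (star b * b) := idem_comm (isIdem_sm b) (u ⊓ s).2
    have hK : star b * ((b * ((u ⊓ s : Idem M) : M) * star b) * (star a * a)) * b
        = ((⊥ : Idem M) : M) := by
      simp only [mul_assoc]
      rw [ra3 hcu]
      simp only [mul_assoc]
      rw [ra3 (sms b)]
      exact u₁z'
    have gY : (b * ((u ⊓ s : Idem M) : M) * star b) * (b * star b)
        = b * ((u ⊓ s : Idem M) : M) * star b := conj_le _ b
    have k4 : (star a * a) * (b * star b) = (b * star b) * (star a * a) :=
      idem_comm (isIdem_sm a) (isIdem_ms b)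
    have hYbs : ((b * ((u ⊓ s : Idem M) : M) * star b) * (star a * a)) * (b * star b)
        = (b * ((u ⊓ s : Idem M) : M) * star b) * (star a * a) := by
      rw [mul_assoc (b * ((u ⊓ s : Idem M) : M) * star b), k4, ← mul_assoc, gY]
    have bsg : (b * star b) * (b * ((u ⊓ s : Idem M) : M) * star b)
        = b * ((u ⊓ s : Idem M) : M) * star b := by
      rw [idem_comm (isIdem_ms b) hgi]; exact gY
    have hbsY : (b * star b) * ((b * ((u ⊓ s : Idem M) : M) * star b) * (star a * a))
        = (b * ((u ⊓ s : Idem M) : M) * star b) * (star a * a) := by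
      rw [← mul_assoc, bsg]
    have eq1 : (b * star b) * ((b * ((u ⊓ s : Idem M) : M) * star b) * (star a * a))
        * (b * star b) = (b * ((u ⊓ s : Idem M) : M) * star b) * (star a * a) := by
      rw [hbsY, hYbs]
    calc (b * ((u ⊓ s : Idem M) : M) * star b) * (star a * a)
        = (b * star b) * ((b * ((u ⊓ s : Idem M) : M) * star b) * (star a * a))
          * (b * star b) := eq1.symm
      _ = b * (star b * ((b * ((u ⊓ s : Idem M) : M) * star b) * (star a * a)) * b)
          * star b := by simp only [mul_assoc]
      _ = b * ((⊥ : Idem M) : M) * star b := by rw [hK]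
      _ = ((⊥ : Idem M) : M) := by rw [(hbot b).2, (hbot (star b)).1]
  · exact ⟨hu₁s, hgi.eq⟩
  · show ((u ⊓ sᶜ : Idem M) : M) * (star b * b) = ((⊥ : Idem M) : M)
    refine (mul_coe_bot_iff horder _ s).mpr ?_
    rw [inf_assoc, inf_comm sᶜ s, inf_compl_eq_bot', inf_bot_eq]
  · -- the product step
    intro m n hm hn1 hn2
    show (u : M) * (star (m * n) * (m * n)) = ((⊥ : Idem M) : M)
    obtain ⟨N1, N2⟩ := hn1
    set sx : Idem M := ⟨star (m*n) * (m*n), isIdem_sm (m*n)⟩ with hsx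
    set sn : Idem M := ⟨star n * n, isIdem_sm n⟩ with hsn
    have hsxn : sx ≤ sn := by
      rw [horder]
      show star (m*n) * (m*n) * (star n * n) = star (m*n) * (m*n)
      simp only [star_mul, mul_assoc]
      rw [rt3 (mss n)]
    have usplit : (u ⊓ s) ⊔ (u ⊓ sᶜ) = u := by
      rw [← inf_sup_left, sup_compl_eq_top, inf_top_eq]
    have u₂sx : (u ⊓ sᶜ) ⊓ sx = ⊥ := by
      have u₂sn : (u ⊓ sᶜ) ⊓ sn = ⊥ := (mul_coe_bot_iff horder _ sn).mp hn2
      exact eq_bot_iff.mpr ((inf_le_inf_left _ hsxn).trans u₂sn.le)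
    have u₁sx : (u ⊓ s) ⊓ sx = ⊥ := by
      set k : Idem M := (u ⊓ s) ⊓ sx with hk
      have hku₁ : (k : M) * ((u ⊓ s : Idem M) : M) = k := (horder _ _).mp inf_le_left
      have kn : (k : M) * (star n * n) = k := (horder k sn).mp (inf_le_right.trans hsxn)
      have hksx : (k : M) * (star (m*n) * (m*n)) = k := (horder k sx).mp inf_le_right
      have knms : (k : M) * (star n * (star m * (m * n))) = k := by
        simpa only [star_mul, mul_assoc] using hksx
      have knms' : (k : M) * star n * star m * m * n = k := by
        simpa only [← mul_assoc] using knms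
      have kn' : (k : M) * star n * n = k := by rw [mul_assoc]; exact kn
      have r1 : (n * (k:M) * star n) * (n * ((u ⊓ s : Idem M) : M) * star n)
          = n * (k:M) * star n := by
        simp only [mul_assoc]
        rw [ra3 kn', ra2 hku₁]
      have nkg : (n * (k:M) * star n) * (b * ((u ⊓ s : Idem M) : M) * star b)
          = n * (k:M) * star n := le_trans' r1 N2
      have hcomm2 : n * star n * (star m * m) = star m * m * (n * star n) :=
        idem_comm (isIdem_ms n) (isIdem_sm m)
      have nkmm : (n * (k:M) * star n) * (star m * m) = n * (k:M) * star n := by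
        conv_lhs => rw [← knms]
        simp only [mul_assoc]
        rw [rt4' hcomm2]
        simp only [mul_assoc]
        rw [ra3 (mss m), ra5 knms']
      have nkz : n * (k:M) * star n = ((⊥ : Idem M) : M) := by
        have t1 : (n * (k:M) * star n)
            * ((b * ((u ⊓ s : Idem M) : M) * star b) * (star m * m))
            = n * (k:M) * star n := by
          rw [← mul_assoc, nkg, nkmm]
        rw [hm, (hbot _).2] at t1
        exact t1.symm
      have h6 := conj_back n k.2 kn
      rw [nkz, (hbot _).2, (hbot _).1] at h6
      exact Subtype.ext h6.symm
    refine (mul_coe_bot_iff horder u sx).mpr ?_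
    rw [← usplit, inf_sup_right, u₁sx, u₂sx, sup_idem]

lemma one_idem : IsIdempotentElem (1 : M) := one_mul 1

lemma singleton_z
    (hbot : ∀ m : M, ((⊥ : Idem M) : M) * m = ((⊥ : Idem M) : M) ∧
      m * ((⊥ : Idem M) : M) = ((⊥ : Idem M) : M)) :
    Vsharp ((⊥ : Idem M) : M) (1 : M) = {((⊥ : Idem M) : M)} := by
  ext m
  simp only [Vsharp, Set.mem_setOf_eq, Set.mem_singleton_iff, one_mul]
  constructor
  · intro h
    calc m = m * (star m * m) := (rt3 (mss m)).symm
      _ = m * ((⊥ : Idem M) : M) := by rw [h]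
      _ = ((⊥ : Idem M) : M) := (hbot m).2
  · rintro rfl
    rw [star_of_idem (⊥ : Idem M).2]
    exact (⊥ : Idem M).2

lemma idem_singleton (horder : ∀ e f : Idem M, e ≤ f ↔ (e : M) * f = e)
    (u : Idem M) :
    (Subtype.val ⁻¹' (Vef (u : M) 1 ∩ Vsharp ((⊥ : Idem M) : M) ((uᶜ : Idem M) : M))
      : Set (Idem M)) = {u} := by
  ext w
  simp only [Set.mem_preimage, Set.mem_inter_iff, Vef, Vsharp, Set.mem_setOf_eq,
    Set.mem_singleton_iff, mul_one, and_true, star_of_idem w.2, w.2.eq]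
  constructor
  · rintro ⟨h1, h2⟩
    have l1 : u ≤ w := (horder u w).mpr h1
    have l2 : w ≤ u := by
      have : uᶜ ⊓ w = ⊥ := (mul_coe_bot_iff horder uᶜ w).mp h2
      rw [inf_comm] at this
      exact (inf_compl_bot_iff w u).mp this
    exact le_antisymm l2 l1
  · rintro rfl
    refine ⟨w.2.eq, ?_⟩
    refine (mul_coe_bot_iff horder wᶜ w).mpr ?_
    rw [inf_comm]
    exact inf_compl_eq_bot'

end BA

section Preim
variable {M : Type*} [InverseMonoid M]

lemma star_preim_Vef (e f : M) : (star : M → M) ⁻¹' (Vef e f) = VefStar e f := by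
  ext m
  simp only [Set.mem_preimage, Vef, VefStar, Set.mem_setOf_eq, star_star]

lemma star_preim_VefStar (e f : M) : (star : M → M) ⁻¹' (VefStar e f) = Vef e f := by
  ext m
  simp only [Set.mem_preimage, Vef, VefStar, Set.mem_setOf_eq, star_star]

lemma star_preim_Vsharp (z e : M) : (star : M → M) ⁻¹' (Vsharp z e) = sharpV z e := by
  ext m
  simp only [Set.mem_preimage, Vsharp, sharpV, Set.mem_setOf_eq, star_star]

lemma star_preim_sharpV (z e : M) : (star : M → M) ⁻¹' (sharpV z e) = Vsharp z e := by
  ext m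
  simp only [Set.mem_preimage, Vsharp, sharpV, Set.mem_setOf_eq, star_star]

lemma units_eq : {m : M | m * star m = 1 ∧ star m * m = 1} = VefStar 1 1 ∩ Vef 1 1 := by
  ext m
  simp only [Set.mem_setOf_eq, Set.mem_inter_iff, Vef, VefStar, one_mul, mul_one,
    Set.mem_setOf_eq, and_true]

end Preim

end IMAux

open IMAux in
/-- **The compact-open topology on an inverse monoid with Boolean algebra of idempotents.**
Let `M` be an inverse monoid whose idempotents form a Boolean algebra (for the natural
partial order, with top `1` and absorbing bottom `0`).  Equip `M` with the compact-open
topology.  Then: (i) `M` is a zero-dimensional topological inverse monoid (multiplication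
and `star` are continuous, and there is a base of clopen sets); (ii) the idempotents form a
discrete subspace; (iii) `{0}` is open and the group of units of `M` is clopen. -/
theorem compactOpen_zeroDimensional_inverse_monoid {M : Type*} [InverseMonoid M]
    [BooleanAlgebra (Idem M)]
    (horder : ∀ e f : Idem M, e ≤ f ↔ (e : M) * f = e)
    (htop : ((⊤ : Idem M) : M) = 1)
    (hbot : ∀ m : M, ((⊥ : Idem M) : M) * m = ((⊥ : Idem M) : M) ∧
      m * ((⊥ : Idem M) : M) = ((⊥ : Idem M) : M)) :
    letI : TopologicalSpace M := compactOpenTopology (((⊥ : Idem M) : M))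
    Continuous (fun p : M × M => p.1 * p.2) ∧
    Continuous (star : M → M) ∧
    (∀ s : Set M, IsOpen s → ∀ x ∈ s, ∃ t : Set M, IsClopen t ∧ x ∈ t ∧ t ⊆ s) ∧
    DiscreteTopology (Idem M) ∧
    IsOpen ({((⊥ : Idem M) : M)} : Set M) ∧
    IsClopen {m : M | m * star m = 1 ∧ star m * m = 1} := by
  letI : TopologicalSpace M := compactOpenTopology (((⊥ : Idem M) : M))
  have hSopen : ∀ W ∈ SB ((⊥ : Idem M) : M), IsOpen W := fun W hW =>
    TopologicalSpace.GenerateOpen.basic W hW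
  -- star is continuous
  have hstar : Continuous (star : M → M) := by
    apply continuous_generateFrom_iff.mpr
    intro W hW
    obtain ⟨e, f, he, hf, hcase⟩ := hW
    rcases hcase with rfl | rfl | rfl | rfl
    · rw [star_preim_Vef]; exact hSopen _ ⟨e, f, he, hf, Or.inr (Or.inl rfl)⟩
    · rw [star_preim_VefStar]; exact hSopen _ ⟨e, f, he, hf, Or.inl rfl⟩
    · rw [star_preim_Vsharp]
      exact hSopen _ ⟨e, f, he, hf, Or.inr (Or.inr (Or.inr rfl))⟩
    · rw [star_preim_sharpV]
      exact hSopen _ ⟨e, f, he, hf, Or.inr (Or.inr (Or.inl rfl))⟩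
  -- multiplication: preimages of the basic opens
  have hmulVef : ∀ e f : M, IsIdempotentElem e → IsIdempotentElem f →
      IsOpen ((fun p : M × M => p.1 * p.2) ⁻¹' (Vef e f)) := by
    intro e f he hf
    rw [isOpen_prod_iff]
    intro a b hab
    obtain ⟨hgi, hmema, hmemb⟩ := vef_mul_nbhd he hab
    exact ⟨Vef (b * e * star b) f, Vef e (b * e * star b),
      hSopen _ ⟨_, _, hgi, hf, Or.inl rfl⟩, hSopen _ ⟨_, _, he, hgi, Or.inl rfl⟩,
      hmema, hmemb, by rintro ⟨m, n⟩ ⟨h1, h2⟩; exact vef_step he h1 h2⟩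
  have hmulVsharp : ∀ e : M, IsIdempotentElem e →
      IsOpen ((fun p : M × M => p.1 * p.2) ⁻¹' (Vsharp ((⊥ : Idem M) : M) e)) := by
    intro e he
    rw [isOpen_prod_iff]
    intro a b hab
    obtain ⟨g, u₁, u₂, ha, hb1, hb2, hstep⟩ := vsharp_mul_nbhd horder hbot ⟨e, he⟩ hab
    refine ⟨Vsharp ((⊥ : Idem M) : M) (g : M),
      Vef (u₁ : M) (g : M) ∩ Vsharp ((⊥ : Idem M) : M) (u₂ : M),
      hSopen _ ⟨(g : M), 1, g.2, one_idem, Or.inr (Or.inr (Or.inl rfl))⟩,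
      IsOpen.inter (hSopen _ ⟨_, _, u₁.2, g.2, Or.inl rfl⟩)
        (hSopen _ ⟨(u₂ : M), 1, u₂.2, one_idem, Or.inr (Or.inr (Or.inl rfl))⟩),
      ha, ⟨hb1, hb2⟩, ?_⟩
    rintro ⟨m, n⟩ ⟨h1, h2, h3⟩
    exact hstep m n h1 h2 h3
  have hswap : Continuous (fun p : M × M => (star p.2, star p.1)) :=
    (hstar.comp continuous_snd).prodMk (hstar.comp continuous_fst)
  have hmul : Continuous (fun p : M × M => p.1 * p.2) := by
    apply continuous_generateFrom_iff.mpr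
    intro W hW
    obtain ⟨e, f, he, hf, hcase⟩ := hW
    rcases hcase with rfl | rfl | rfl | rfl
    · exact hmulVef e f he hf
    · have hset : (fun p : M × M => p.1 * p.2) ⁻¹' (VefStar e f)
          = (fun p : M × M => (star p.2, star p.1)) ⁻¹'
            ((fun p : M × M => p.1 * p.2) ⁻¹' (Vef e f)) := by
        ext p
        simp only [Set.mem_preimage, ← star_preim_Vef, IMAux.star_mul]
      rw [hset]
      exact hswap.isOpen_preimage _ (hmulVef e f he hf)
    · exact hmulVsharp e he
    · have hset : (fun p : M × M => p.1 * p.2) ⁻¹' (sharpV ((⊥ : Idem M) : M) e)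
          = (fun p : M × M => (star p.2, star p.1)) ⁻¹'
            ((fun p : M × M => p.1 * p.2) ⁻¹' (Vsharp ((⊥ : Idem M) : M) e)) := by
        ext p
        simp only [Set.mem_preimage, ← star_preim_Vsharp, IMAux.star_mul]
      rw [hset]
      exact hswap.isOpen_preimage _ (hmulVsharp e he)
  -- subbasic sets are clopen
  have closedVef : ∀ (e f : M), IsIdempotentElem e → IsIdempotentElem f →
      IsClosed (Vef e f) := by
    intro e f he hf
    rw [← isOpen_compl_iff, isOpen_iff_forall_mem_open]
    intro m hm
    obtain ⟨W', hW', hmW', hdisj⟩ := vef_compl horder hbot ⟨e, he⟩ ⟨f, hf⟩ hm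
    exact ⟨W', fun n hn hnV => Set.eq_empty_iff_forall_notMem.mp hdisj n ⟨hn, hnV⟩,
      hSopen _ hW', hmW'⟩
  have closedVsharp : ∀ (e : M), IsIdempotentElem e →
      IsClosed (Vsharp ((⊥ : Idem M) : M) e) := by
    intro e he
    rw [← isOpen_compl_iff, isOpen_iff_forall_mem_open]
    intro m hm
    obtain ⟨W', hW', hmW', hdisj⟩ := vsharp_compl horder hbot ⟨e, he⟩ hm
    exact ⟨W', fun n hn hnV => Set.eq_empty_iff_forall_notMem.mp hdisj n ⟨hn, hnV⟩,
      hSopen _ hW', hmW'⟩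
  have hclopen : ∀ W ∈ SB ((⊥ : Idem M) : M), IsClopen W := by
    intro W hW
    refine ⟨?_, hSopen W hW⟩
    obtain ⟨e, f, he, hf, hcase⟩ := hW
    rcases hcase with rfl | rfl | rfl | rfl
    · exact closedVef e f he hf
    · rw [← star_preim_Vef]; exact (closedVef e f he hf).preimage hstar
    · exact closedVsharp e he
    · rw [← star_preim_Vsharp]; exact (closedVsharp e he).preimage hstar
  refine ⟨hmul, hstar, ?_, ?_, ?_, ?_⟩
  · -- zero-dimensionality
    intro s hs
    have hs' : TopologicalSpace.GenerateOpen (SB ((⊥ : Idem M) : M)) s := hs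
    clear hs
    induction hs' with
    | basic W hW => exact fun x hx => ⟨W, hclopen W hW, hx, subset_rfl⟩
    | univ => exact fun x hx => ⟨Set.univ, isClopen_univ, hx, subset_rfl⟩
    | inter s t _ _ ihs iht =>
      intro x hx
      obtain ⟨ts, hts, hxs, hsub⟩ := ihs x hx.1
      obtain ⟨tt, htt, hxt, hsub'⟩ := iht x hx.2
      exact ⟨ts ∩ tt, hts.inter htt, ⟨hxs, hxt⟩, Set.inter_subset_inter hsub hsub'⟩
    | sUnion S _ ih =>
      intro x hx
      obtain ⟨si, hsi, hxsi⟩ := hx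
      obtain ⟨t, ht, hxt, hsub⟩ := ih si hsi x hxsi
      exact ⟨t, ht, hxt, hsub.trans (Set.subset_sUnion_of_mem hsi)⟩
  · -- discreteness of the idempotents
    apply discreteTopology_iff_isOpen_singleton.mpr
    intro u
    rw [isOpen_induced_iff]
    exact ⟨Vef (u : M) 1 ∩ Vsharp ((⊥ : Idem M) : M) ((uᶜ : Idem M) : M),
      IsOpen.inter (hSopen _ ⟨(u : M), 1, u.2, one_idem, Or.inl rfl⟩)
        (hSopen _ ⟨_, 1, (uᶜ : Idem M).2, one_idem, Or.inr (Or.inr (Or.inl rfl))⟩),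
      idem_singleton horder u⟩
  · -- {0} is open
    rw [← singleton_z hbot]
    exact hSopen _ ⟨1, 1, one_idem, one_idem, Or.inr (Or.inr (Or.inl rfl))⟩
  · -- the group of units is clopen
    rw [units_eq]
    exact (hclopen _ ⟨1, 1, one_idem, one_idem, Or.inr (Or.inl rfl)⟩).inter
      (hclopen _ ⟨1, 1, one_idem, one_idem, Or.inl rfl⟩)
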